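/- Fix an integer k ≥ 3. For each positive integer M, write M = qk + r with q = ⌊M/k⌋ and 0 ≤ r < k, and let w*_{k,M} = [ (M−(q+1))!/(q+1)! ]^{kr} · [ (M−q)!/q! ]^{k(k−r)}. Then lim_{M→∞} [(M!)^{2k−k²}]^{1/M} · (w*_{k,M})^{1/M} = (k−1)^{k(k−1)} / k^{k(k−2)}. -/

import Mathlib

open Filter Real Topology

noncomputable def Efn (n : ℕ) : ℝ := Real.log n.factorial - ((n : ℝ) * Real.log n - n)

lemma tendsto_Efn_div : Tendsto (fun n : ℕ => Efn n / n) atTop (𝓝 0) := by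
  have hs := Stirling.tendsto_stirlingSeq_sqrt_pi
  have hpos : (0:ℝ) < Real.sqrt Real.pi := Real.sqrt_pos.2 Real.pi_pos
  have hlog : Tendsto (fun n => Real.log (Stirling.stirlingSeq n)) atTop
      (𝓝 (Real.log (Real.sqrt Real.pi))) :=
    ((Real.continuousAt_log hpos.ne').tendsto).comp hs
  have hnat : Tendsto (fun n : ℕ => (n:ℝ)) atTop atTop := tendsto_natCast_atTop_atTop
  have h1 : Tendsto (fun n : ℕ => Real.log (Stirling.stirlingSeq n) / n) atTop (𝓝 0) :=
    hlog.div_atTop hnat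
  have h2 : Tendsto (fun n : ℕ => (Real.log 2 + Real.log n) / (2 * n)) atTop (𝓝 0) := by
    have hl : Tendsto (fun x : ℝ => (Real.log 2 + Real.log x) / (2 * x)) atTop (𝓝 0) := by
      have := Real.isLittleO_log_id_atTop
      have hx : Tendsto (fun x : ℝ => Real.log x / x) atTop (𝓝 0) :=
        this.tendsto_div_nhds_zero
      have hc : Tendsto (fun x : ℝ => Real.log 2 / x) atTop (𝓝 0) :=
        tendsto_const_nhds.div_atTop tendsto_id
      have h0 : Tendsto (fun x : ℝ => (Real.log 2 / x + Real.log x / x) / 2) atTop (𝓝 0) := by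
        simpa using (hc.add hx).div_const 2
      refine h0.congr fun x => ?_
      rw [← add_div, div_div, mul_comm]
    exact hl.comp hnat
  have := (h1.add h2)
  rw [add_zero] at this
  refine this.congr' ?_
  filter_upwards [eventually_ge_atTop 1] with n hn
  have hn0 : (0:ℝ) < (n:ℝ) := by exact_mod_cast hn
  have hfac : (n.factorial : ℝ) = Stirling.stirlingSeq n * (Real.sqrt (2*n) * ((n:ℝ)/Real.exp 1)^n) := by
    rw [Stirling.stirlingSeq]
    field_simp
  have hsq : (0:ℝ) < Real.sqrt (2*n) := Real.sqrt_pos.2 (by positivity)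
  have hpow : (0:ℝ) < ((n:ℝ)/Real.exp 1)^n := by positivity
  have hss : (0:ℝ) < Stirling.stirlingSeq n := by
    rw [Stirling.stirlingSeq]; exact div_pos (by exact_mod_cast n.factorial_pos) (mul_pos hsq hpow)
  have : Real.log n.factorial = Real.log (Stirling.stirlingSeq n) + ((Real.log 2 + Real.log n)/2 + ((n:ℝ) * Real.log n - n)) := by
    rw [hfac, Real.log_mul hss.ne' (by positivity), Real.log_mul hsq.ne' hpow.ne',
      Real.log_sqrt (by positivity), Real.log_mul (by norm_num) hn0.ne', Real.log_pow,
      Real.log_div hn0.ne' (Real.exp_ne_zero 1), Real.log_exp]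
    ring
  simp only [Efn, this]
  field_simp
  ring

lemma tendsto_Efn_comp (a : ℕ → ℕ) (h1 : Tendsto a atTop atTop)
    (h2 : ∀ᶠ M in atTop, a M ≤ M) :
    Tendsto (fun M : ℕ => Efn (a M) / M) atTop (𝓝 0) := by
  have h3 : Tendsto (fun M => Efn (a M) / (a M : ℝ)) atTop (𝓝 0) := tendsto_Efn_div.comp h1
  have h4 : Tendsto (fun M => ‖Efn (a M) / (a M : ℝ)‖) atTop (𝓝 0) := by
    simpa using h3.norm
  refine squeeze_zero_norm' ?_ h4
  filter_upwards [h2, h1.eventually (eventually_ge_atTop 1)] with M hle h1M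
  rw [norm_div, norm_div, Real.norm_natCast, Real.norm_natCast]
  have haM : (0:ℝ) < (a M : ℝ) := by exact_mod_cast h1M
  have hle' : (a M : ℝ) ≤ (M : ℝ) := by exact_mod_cast hle
  gcongr

noncomputable def psi (x : ℝ) : ℝ := x * Real.log x

lemma bdd_mul_zero (c u : ℕ → ℝ) (C : ℝ)
    (hc : ∀ᶠ M in atTop, ‖c M‖ ≤ C) (hu : Tendsto u atTop (𝓝 0)) :
    Tendsto (fun M => c M * u M) atTop (𝓝 0) := by
  refine squeeze_zero_norm' ?_ (by simpa using hu.norm.const_mul C)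
  filter_upwards [hc] with M h
  rw [norm_mul]
  exact mul_le_mul_of_nonneg_right h (norm_nonneg _)

set_option maxHeartbeats 2000000 in


/-- **Equation (17).** For fixed k ≥ 3, with q = ⌊M/k⌋ and r = M mod k and
w*_{k,M} = [(M−(q+1))!/(q+1)!]^{kr} · [(M−q)!/q!]^{k(k−r)},
lim_{M→∞} [(M!)^{2k−k²}]^{1/M} (w*_{k,M})^{1/M} = (k−1)^{k(k−1)} / k^{k(k−2)}. -/
theorem wstar_growth_rate
    (k : ℕ) (hk : 3 ≤ k)
    (wstar : ℕ → ℝ)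
    (hw : ∀ M, wstar M =
      (((M - (M / k + 1)).factorial : ℝ) / ((M / k + 1).factorial : ℝ)) ^ (k * (M % k)) *
      (((M - M / k).factorial : ℝ) / ((M / k).factorial : ℝ)) ^ (k * (k - M % k))) :
    Filter.Tendsto
      (fun M : ℕ =>
        ((M.factorial : ℝ) ^ (2 * (k : ℤ) - (k : ℤ) ^ 2)) ^ ((1 : ℝ) / M) *
          (wstar M) ^ ((1 : ℝ) / M))
      Filter.atTop
      (nhds (((k : ℝ) - 1) ^ (k * (k - 1)) / (k : ℝ) ^ (k * (k - 2)))) := by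
  have hkR : (3:ℝ) ≤ (k:ℝ) := by exact_mod_cast hk
  have hk0 : (0:ℝ) < (k:ℝ) := by linarith
  have hkne : (k:ℝ) ≠ 0 := hk0.ne'
  have hk1 : (0:ℝ) < (k:ℝ) - 1 := by linarith
  have h1k : (0:ℝ) < 1 - 1/(k:ℝ) := by
    have : 1/(k:ℝ) ≤ 1/3 := by
      rw [div_le_div_iff₀ hk0 (by norm_num)]; linarith
    linarith
  have h1kne : (1:ℝ)/(k:ℝ) ≠ 0 := by positivity
  set LT : ℝ := (k:ℝ)*(k:ℝ)*(psi (1 - 1/(k:ℝ)) - psi (1/(k:ℝ))) with hLTdef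
  -- Step A : target = exp LT
  have htarget : ((k:ℝ) - 1) ^ (k * (k - 1)) / (k:ℝ) ^ (k * (k - 2)) = Real.exp LT := by
    have e1 : psi (1 - 1/(k:ℝ)) = (1-1/(k:ℝ)) * (Real.log ((k:ℝ) - 1) - Real.log (k:ℝ)) := by
      rw [psi, show (1 - 1/(k:ℝ)) = ((k:ℝ)-1)/(k:ℝ) by field_simp,
        Real.log_div hk1.ne' hkne]
    have e2 : psi (1/(k:ℝ)) = (1/(k:ℝ)) * (0 - Real.log (k:ℝ)) := by
      rw [psi, Real.log_div one_ne_zero hkne, Real.log_one]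
    have key : LT = ((k*(k-1) : ℕ):ℝ) * Real.log ((k:ℝ) - 1) - ((k*(k-2):ℕ):ℝ) * Real.log (k:ℝ) := by
      have c1 : ((k*(k-1):ℕ):ℝ) = (k:ℝ)*((k:ℝ)-1) := by
        push_cast [Nat.cast_sub (by omega : 1 ≤ k)]; ring
      have c2 : ((k*(k-2):ℕ):ℝ) = (k:ℝ)*((k:ℝ)-2) := by
        push_cast [Nat.cast_sub (by omega : 2 ≤ k)]; ring
      rw [hLTdef, e1, e2, c1, c2]; field_simp; ring
    rw [key, Real.exp_sub, ← Real.log_pow, ← Real.log_pow,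
      Real.exp_log (by positivity), Real.exp_log (by positivity)]
  -- basic tendsto facts
  have h1M : Tendsto (fun M : ℕ => 1/(M:ℝ)) atTop (𝓝 0) := tendsto_one_div_atTop_nhds_zero_nat
  have hdivc : ∀ c : ℕ, 0 < c → Tendsto (fun M : ℕ => M / c) atTop atTop := by
    intro c hc
    refine Filter.tendsto_atTop_atTop.2 fun b => ⟨c*b, fun M hM => ?_⟩
    exact (Nat.le_div_iff_mul_le hc).2 (by rw [mul_comm]; exact hM)
  have hd3 : ∀ M : ℕ, M / k ≤ M / 3 := fun M => Nat.div_le_div_left hk (by omega)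
  -- the five Efn limits
  have e0 : Tendsto (fun M : ℕ => Efn M / M) atTop (𝓝 0) :=
    tendsto_Efn_comp id tendsto_id (Filter.Eventually.of_forall fun M => le_refl M)
  have e4 : Tendsto (fun M : ℕ => Efn (M/k) / M) atTop (𝓝 0) :=
    tendsto_Efn_comp _ (hdivc k (by omega)) (Filter.Eventually.of_forall fun M => Nat.div_le_self M k)
  have e2 : Tendsto (fun M : ℕ => Efn (M/k + 1) / M) atTop (𝓝 0) := by
    refine tendsto_Efn_comp _ (tendsto_atTop_mono (fun M => Nat.le_add_right (M/k) 1) (hdivc k (by omega))) ?_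
    filter_upwards [eventually_ge_atTop 2] with M hM
    have := hd3 M; omega
  have e3 : Tendsto (fun M : ℕ => Efn (M - M/k) / M) atTop (𝓝 0) := by
    refine tendsto_Efn_comp _ ?_ (Filter.Eventually.of_forall fun M => Nat.sub_le M _)
    refine tendsto_atTop_mono' atTop ?_ (hdivc 2 (by omega))
    filter_upwards with M
    have := hd3 M; omega
  have e1 : Tendsto (fun M : ℕ => Efn (M - (M/k + 1)) / M) atTop (𝓝 0) := by
    refine tendsto_Efn_comp _ ?_ (Filter.Eventually.of_forall fun M => Nat.sub_le M _)
    refine tendsto_atTop_mono' atTop ?_ (hdivc 2 (by omega))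
    filter_upwards [eventually_ge_atTop 6] with M hM
    have := hd3 M; omega
  -- the x limits
  have hmodbd : ∀ᶠ M : ℕ in atTop, ‖((M % k : ℕ) : ℝ)‖ ≤ (k:ℝ) := by
    filter_upwards with M
    rw [Real.norm_natCast]
    exact_mod_cast (Nat.mod_lt M (by omega : 0 < k)).le
  have cM : ∀ M : ℕ, (k:ℝ) * ((M/k : ℕ):ℝ) + ((M % k : ℕ):ℝ) = (M:ℝ) := by
    intro M; exact_mod_cast Nat.div_add_mod M k
  have hx4 : Tendsto (fun M : ℕ => ((M/k : ℕ):ℝ)/M) atTop (𝓝 (1/(k:ℝ))) := by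
    have hu : Tendsto (fun M : ℕ => ((M % k : ℕ):ℝ) * (1/((k:ℝ)*M))) atTop (𝓝 0) := by
      refine bdd_mul_zero _ _ (k:ℝ) hmodbd ?_
      have h := h1M.const_mul (1/(k:ℝ))
      rw [mul_zero] at h
      refine h.congr fun M => ?_
      rw [one_div_mul_one_div]
    have h := (tendsto_const_nhds (x := (1:ℝ)/(k:ℝ))).sub hu
    rw [sub_zero] at h
    refine h.congr' ?_
    filter_upwards [eventually_ge_atTop 1] with M hM
    have hM0 : (M:ℝ) ≠ 0 := by positivity
    field_simp
    linear_combination (-1:ℝ) * cM M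
  have hx2 : Tendsto (fun M : ℕ => ((M/k + 1 : ℕ):ℝ)/M) atTop (𝓝 (1/(k:ℝ))) := by
    have h := hx4.add h1M
    rw [add_zero] at h
    refine h.congr fun M => ?_
    push_cast
    rw [← add_div]
  have hx3 : Tendsto (fun M : ℕ => ((M - M/k : ℕ):ℝ)/M) atTop (𝓝 (1 - 1/(k:ℝ))) := by
    have h := (tendsto_const_nhds (x := (1:ℝ))).sub hx4
    refine h.congr' ?_
    filter_upwards [eventually_ge_atTop 1] with M hM
    have hM0 : (M:ℝ) ≠ 0 := by positivity
    rw [Nat.cast_sub (Nat.div_le_self M k)]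
    field_simp
  have hx1 : Tendsto (fun M : ℕ => ((M - (M/k + 1) : ℕ):ℝ)/M) atTop (𝓝 (1 - 1/(k:ℝ))) := by
    have h := ((tendsto_const_nhds (x := (1:ℝ))).sub hx4).sub h1M
    rw [show (1:ℝ) - 1/(k:ℝ) - 0 = 1 - 1/(k:ℝ) by ring] at h
    refine h.congr' ?_
    filter_upwards [eventually_ge_atTop 6] with M hM
    have hs : M/k + 1 ≤ M := by have := hd3 M; omega
    have hM0 : (M:ℝ) ≠ 0 := by positivity
    rw [Nat.cast_sub hs]
    push_cast
    field_simp
    ring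
  -- psi limits
  have hpsic : ∀ c : ℝ, c ≠ 0 → ContinuousAt psi c := fun c hc => by
    exact continuousAt_id.mul (Real.continuousAt_log hc)
  have p1 : Tendsto (fun M : ℕ => psi (((M - (M/k + 1) : ℕ):ℝ)/M)) atTop (𝓝 (psi (1 - 1/(k:ℝ)))) :=
    ((hpsic _ h1k.ne').tendsto).comp hx1
  have p2 : Tendsto (fun M : ℕ => psi (((M/k + 1 : ℕ):ℝ)/M)) atTop (𝓝 (psi (1/(k:ℝ)))) :=
    ((hpsic _ h1kne).tendsto).comp hx2
  have p3 : Tendsto (fun M : ℕ => psi (((M - M/k : ℕ):ℝ)/M)) atTop (𝓝 (psi (1 - 1/(k:ℝ)))) :=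
    ((hpsic _ h1k.ne').tendsto).comp hx3
  have p4 : Tendsto (fun M : ℕ => psi (((M/k : ℕ):ℝ)/M)) atTop (𝓝 (psi (1/(k:ℝ)))) :=
    ((hpsic _ h1kne).tendsto).comp hx4
  -- the five summand limits
  have hmulbd : ∀ᶠ M : ℕ in atTop, ‖(k:ℝ) * ((M % k : ℕ):ℝ)‖ ≤ (k:ℝ)*(k:ℝ) := by
    filter_upwards [hmodbd] with M h
    rw [Real.norm_natCast] at h
    rw [norm_mul, Real.norm_natCast, Real.norm_natCast]
    exact mul_le_mul_of_nonneg_left h (by positivity)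
  have S1 : Tendsto (fun M : ℕ => (2*(k:ℝ) - (k:ℝ)^2) * (Efn M / M)) atTop (𝓝 0) := by
    simpa using e0.const_mul (2*(k:ℝ) - (k:ℝ)^2)
  have S2 : Tendsto (fun M : ℕ =>
      ((k:ℝ) * ((M % k : ℕ):ℝ)) * (Efn (M - (M/k+1)) / M - Efn (M/k+1) / M)) atTop (𝓝 0) := by
    refine bdd_mul_zero _ _ ((k:ℝ)*(k:ℝ)) hmulbd ?_
    simpa using e1.sub e2
  have S3 : Tendsto (fun M : ℕ =>
      ((k:ℝ)*(k:ℝ) - (k:ℝ) * ((M % k : ℕ):ℝ)) * (Efn (M - M/k) / M - Efn (M/k) / M)) atTop (𝓝 0) := by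
    refine bdd_mul_zero _ _ ((k:ℝ)*(k:ℝ)) ?_ (by simpa using e3.sub e4)
    filter_upwards [hmodbd] with M h
    rw [Real.norm_natCast] at h
    have h0 : (0:ℝ) ≤ ((M % k : ℕ):ℝ) := Nat.cast_nonneg _
    rw [Real.norm_eq_abs, abs_le]
    constructor <;> nlinarith
  have S4 : Tendsto (fun M : ℕ =>
      ((k:ℝ)*(k:ℝ)) * (psi (((M - M/k : ℕ):ℝ)/M) - psi (((M/k : ℕ):ℝ)/M))) atTop (𝓝 LT) := by
    rw [hLTdef]
    exact (p3.sub p4).const_mul _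
  have S5 : Tendsto (fun M : ℕ =>
      ((k:ℝ) * ((M % k : ℕ):ℝ)) * (psi (((M - (M/k+1) : ℕ):ℝ)/M) - psi (((M/k+1 : ℕ):ℝ)/M)
        - psi (((M - M/k : ℕ):ℝ)/M) + psi (((M/k : ℕ):ℝ)/M))) atTop (𝓝 0) := by
    refine bdd_mul_zero _ _ ((k:ℝ)*(k:ℝ)) hmulbd ?_
    have h := (((p1.sub p2).sub p3).add p4)
    rw [show psi (1-1/(k:ℝ)) - psi (1/(k:ℝ)) - psi (1-1/(k:ℝ)) + psi (1/(k:ℝ)) = 0 by ring] at h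
    exact h
  have hA : Tendsto (fun M : ℕ =>
      (2*(k:ℝ) - (k:ℝ)^2) * (Efn M / M)
      + ((k:ℝ) * ((M % k : ℕ):ℝ)) * (Efn (M - (M/k+1)) / M - Efn (M/k+1) / M)
      + ((k:ℝ)*(k:ℝ) - (k:ℝ) * ((M % k : ℕ):ℝ)) * (Efn (M - M/k) / M - Efn (M/k) / M)
      + ((k:ℝ)*(k:ℝ)) * (psi (((M - M/k : ℕ):ℝ)/M) - psi (((M/k : ℕ):ℝ)/M))
      + ((k:ℝ) * ((M % k : ℕ):ℝ)) * (psi (((M - (M/k+1) : ℕ):ℝ)/M) - psi (((M/k+1 : ℕ):ℝ)/M)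
        - psi (((M - M/k : ℕ):ℝ)/M) + psi (((M/k : ℕ):ℝ)/M))) atTop (𝓝 LT) := by
    have h := (((S1.add S2).add S3).add S4).add S5
    simpa using h
  -- eventual equality with the original function
  have claim1 : ∀ᶠ M : ℕ in atTop,
      (fun M : ℕ =>
      (2*(k:ℝ) - (k:ℝ)^2) * (Efn M / M)
      + ((k:ℝ) * ((M % k : ℕ):ℝ)) * (Efn (M - (M/k+1)) / M - Efn (M/k+1) / M)
      + ((k:ℝ)*(k:ℝ) - (k:ℝ) * ((M % k : ℕ):ℝ)) * (Efn (M - M/k) / M - Efn (M/k) / M)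
      + ((k:ℝ)*(k:ℝ)) * (psi (((M - M/k : ℕ):ℝ)/M) - psi (((M/k : ℕ):ℝ)/M))
      + ((k:ℝ) * ((M % k : ℕ):ℝ)) * (psi (((M - (M/k+1) : ℕ):ℝ)/M) - psi (((M/k+1 : ℕ):ℝ)/M)
        - psi (((M - M/k : ℕ):ℝ)/M) + psi (((M/k : ℕ):ℝ)/M))) M
      = Real.log (((M.factorial : ℝ) ^ (2 * (k : ℤ) - (k : ℤ) ^ 2)) ^ ((1 : ℝ) / M) *
          (wstar M) ^ ((1 : ℝ) / M)) := by
    filter_upwards [eventually_ge_atTop (k*k)] with M hM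
    have hM9 : 9 ≤ M := le_trans (Nat.mul_le_mul hk hk) hM
    have hd := hd3 M
    have hs1 : M/k + 1 ≤ M := by omega
    have hsub1 : 1 ≤ M - (M/k + 1) := by omega
    have hsub3 : 1 ≤ M - M/k := by omega
    have hq1 : 1 ≤ M/k := by
      have hkM : k ≤ M := le_trans (Nat.le_mul_of_pos_left k (by omega : 0 < k)) hM
      exact (Nat.one_le_div_iff (by omega)).2 hkM
    have hmle : M % k ≤ k := (Nat.mod_lt M (by omega : 0 < k)).le
    have hMne : ((M:ℕ):ℝ) ≠ 0 := by
      have : (0:ℝ) < (M:ℝ) := by exact_mod_cast (by omega : 0 < M)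
      exact this.ne'
    have hf0 : (0:ℝ) < (M.factorial : ℝ) := by exact_mod_cast M.factorial_pos
    have hf1 : (0:ℝ) < ((M - (M/k+1)).factorial : ℝ) := by exact_mod_cast Nat.factorial_pos _
    have hf2 : (0:ℝ) < (((M/k+1)).factorial : ℝ) := by exact_mod_cast Nat.factorial_pos _
    have hf3 : (0:ℝ) < ((M - M/k).factorial : ℝ) := by exact_mod_cast Nat.factorial_pos _
    have hf4 : (0:ℝ) < ((M/k).factorial : ℝ) := by exact_mod_cast Nat.factorial_pos _
    have hz : (0:ℝ) < (M.factorial:ℝ) ^ (2*(k:ℤ) - (k:ℤ)^2) := zpow_pos hf0 _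
    have hwpos : (0:ℝ) < wstar M := by
      rw [hw M]; positivity
    rw [Real.log_mul (Real.rpow_pos_of_pos hz _).ne' (Real.rpow_pos_of_pos hwpos _).ne',
      Real.log_rpow hz, Real.log_rpow hwpos, Real.log_zpow, hw M,
      Real.log_mul (by positivity) (by positivity), Real.log_pow, Real.log_pow,
      Real.log_div hf1.ne' hf2.ne', Real.log_div hf3.ne' hf4.ne']
    -- expand Efn and psi
    simp only [Efn, psi]
    have hc1 : (0:ℝ) < ((M - (M/k+1) : ℕ):ℝ) := by exact_mod_cast (by omega : 0 < M - (M/k+1))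
    have hc2 : (0:ℝ) < ((M/k+1 : ℕ):ℝ) := by exact_mod_cast (by omega : 0 < M/k+1)
    have hc3 : (0:ℝ) < ((M - M/k : ℕ):ℝ) := by exact_mod_cast (by omega : 0 < M - M/k)
    have hc4 : (0:ℝ) < ((M/k : ℕ):ℝ) := by exact_mod_cast hq1
    rw [Real.log_div hc1.ne' hMne, Real.log_div hc2.ne' hMne, Real.log_div hc3.ne' hMne,
      Real.log_div hc4.ne' hMne]
    push_cast [Nat.cast_sub hs1, Nat.cast_sub (Nat.div_le_self M k), Nat.cast_sub hmle]
    have hrw : ((M % k : ℕ):ℝ) = (M:ℝ) - (k:ℝ)*((M/k : ℕ):ℝ) := by linarith [cM M]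
    rw [hrw]
    field_simp
    ring
  -- conclusion
  rw [htarget]
  have hexp := (Real.continuous_exp.tendsto LT).comp hA
  refine hexp.congr' ?_
  filter_upwards [claim1] with M h
  have hz : (0:ℝ) < (M.factorial:ℝ) ^ (2*(k:ℤ) - (k:ℤ)^2) :=
    zpow_pos (by exact_mod_cast M.factorial_pos) _
  have hwpos : (0:ℝ) < wstar M := by rw [hw M]; positivity
  simp only [Function.comp]
  rw [h, Real.exp_log (by positivity)]
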